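/- Let n ≥ 2 and c > 0 satisfy ‖μ_{0,0}(Ψ)‖ ≥ c‖Ψ‖² for all Ψ ∈ ℂ² ⊗ ℂⁿ. Then for all τ ≥ 0 and all Ψ, ⟨μ_{0,τ}(Ψ)Ψ, Ψ⟩ ≥ c²‖Ψ‖⁴. -/

import Mathlib

open Matrix BigOperators


/-- Kronecker-type tensor product of a `2×2` and an `n×n` matrix, viewed as an
endomorphism of `ℂ² ⊗ ℂⁿ` (indexed by `Fin 2 × Fin n`). -/
def tens {n : ℕ} (B : Matrix (Fin 2) (Fin 2) ℂ) (C : Matrix (Fin n) (Fin n) ℂ) :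
    Matrix (Fin 2 × Fin n) (Fin 2 × Fin n) ℂ :=
  fun p q => B p.1 q.1 * C p.2 q.2

/-- Normalised partial trace over the `ℂⁿ` factor. -/
noncomputable def ptr2 {n : ℕ} (A : Matrix (Fin 2 × Fin n) (Fin 2 × Fin n) ℂ) :
    Matrix (Fin 2) (Fin 2) ℂ :=
  fun i j => (1 / (n : ℂ)) * ∑ k, A (i, k) (j, k)

/-- Normalised partial trace over the `ℂ²` factor. -/
noncomputable def ptr1 {n : ℕ} (A : Matrix (Fin 2 × Fin n) (Fin 2 × Fin n) ℂ) :
    Matrix (Fin n) (Fin n) ℂ :=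
  fun k l => ((1 : ℂ) / 2) * ∑ i, A (i, k) (i, l)

/-- Orthogonal projection `Q` of `gl(ℂ² ⊗ ℂⁿ)` onto `sl(ℂ²) ⊗ ℂ·id`. -/
noncomputable def Qproj {n : ℕ} (A : Matrix (Fin 2 × Fin n) (Fin 2 × Fin n) ℂ) :
    Matrix (Fin 2 × Fin n) (Fin 2 × Fin n) ℂ :=
  tens (ptr2 A - (((1 : ℂ) / 2) * (ptr2 A).trace) • (1 : Matrix (Fin 2) (Fin 2) ℂ))
    (1 : Matrix (Fin n) (Fin n) ℂ)

/-- Orthogonal projection `P` of `gl(ℂ² ⊗ ℂⁿ)` onto `sl(ℂ²) ⊗ sl(ℂⁿ)`. -/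
noncomputable def Pproj {n : ℕ} (A : Matrix (Fin 2 × Fin n) (Fin 2 × Fin n) ℂ) :
    Matrix (Fin 2 × Fin n) (Fin 2 × Fin n) ℂ :=
  A - tens (ptr2 A) (1 : Matrix (Fin n) (Fin n) ℂ)
    - tens (1 : Matrix (Fin 2) (Fin 2) ℂ) (ptr1 A)
    + ((1 / (2 * (n : ℂ))) * A.trace) • (1 : Matrix (Fin 2 × Fin n) (Fin 2 × Fin n) ℂ)

/-- Frobenius (Hilbert–Schmidt) norm. -/
noncomputable def frobNorm {m : Type*} [Fintype m] (A : Matrix m m ℂ) : ℝ :=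
  Real.sqrt (∑ i, ∑ j, ‖A i j‖ ^ 2)

/-- HS inner product. -/
noncomputable def hsI {n : ℕ} (A B : Matrix (Fin 2 × Fin n) (Fin 2 × Fin n) ℂ) : ℂ :=
  ∑ p, ∑ q, A p q * (starRingEnd ℂ) (B p q)

lemma hsI_add_right {n : ℕ} (M A B : Matrix (Fin 2 × Fin n) (Fin 2 × Fin n) ℂ) :
    hsI M (A + B) = hsI M A + hsI M B := by
  simp [hsI, Matrix.add_apply, map_add, mul_add, Finset.sum_add_distrib]

lemma hsI_sub_right {n : ℕ} (M A B : Matrix (Fin 2 × Fin n) (Fin 2 × Fin n) ℂ) :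
    hsI M (A - B) = hsI M A - hsI M B := by
  simp [hsI, Matrix.sub_apply, map_sub, mul_sub, Finset.sum_sub_distrib]

lemma mulVec_eq_hsI {n : ℕ} (M : Matrix (Fin 2 × Fin n) (Fin 2 × Fin n) ℂ)
    (Ψ : Fin 2 × Fin n → ℂ) :
    (∑ i, (M.mulVec Ψ) i * (starRingEnd ℂ) (Ψ i)) = hsI M (vecMulVec Ψ (star Ψ)) := by
  simp only [hsI, Matrix.mulVec, Matrix.vecMulVec_apply, dotProduct, Finset.sum_mul,
    Pi.star_apply, _root_.map_mul, Complex.conj_conj, RCLike.star_def]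
  apply Finset.sum_congr rfl; intro p _
  apply Finset.sum_congr rfl; intro q _
  ring


lemma hsI_tens_one_left {n : ℕ} (B : Matrix (Fin 2) (Fin 2) ℂ)
    (A : Matrix (Fin 2 × Fin n) (Fin 2 × Fin n) ℂ) :
    hsI (tens B (1 : Matrix (Fin n) (Fin n) ℂ)) A
      = ∑ i, ∑ j, B i j * (starRingEnd ℂ) (∑ k, A (i, k) (j, k)) := by
  simp only [hsI, tens, Fintype.sum_prod_type, Matrix.one_apply, mul_ite, mul_one, mul_zero,
    ite_mul, zero_mul, one_mul, Finset.sum_ite_eq, Finset.mem_univ, if_true, map_sum,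
    Finset.mul_sum]
  exact Finset.sum_congr rfl fun x _ => Finset.sum_comm (f := fun (y : Fin n) (x1 : Fin 2) =>
      B x x1 * (starRingEnd ℂ) (A (x, y) (x1, y)))

lemma hsI_tens_one_right {n : ℕ} (M : Matrix (Fin 2 × Fin n) (Fin 2 × Fin n) ℂ)
    (C : Matrix (Fin 2) (Fin 2) ℂ) :
    hsI M (tens C (1 : Matrix (Fin n) (Fin n) ℂ))
      = ∑ i, ∑ j, (∑ k, M (i, k) (j, k)) * (starRingEnd ℂ) (C i j) := by
  simp only [hsI, tens, Fintype.sum_prod_type, Matrix.one_apply, _root_.map_mul, apply_ite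
    (starRingEnd ℂ), _root_.map_one, map_zero, mul_ite, mul_one, mul_zero,
    Finset.sum_ite_eq, Finset.mem_univ, if_true, Finset.sum_mul]
  exact Finset.sum_congr rfl fun x _ => Finset.sum_comm (f := fun (y : Fin n) (x1 : Fin 2) =>
      M (x, y) (x1, y) * (starRingEnd ℂ) (C x x1))

lemma hsI_one_tens_right {n : ℕ} (M : Matrix (Fin 2 × Fin n) (Fin 2 × Fin n) ℂ)
    (D : Matrix (Fin n) (Fin n) ℂ) :
    hsI M (tens (1 : Matrix (Fin 2) (Fin 2) ℂ) D)
      = ∑ k, ∑ l, (∑ i, M (i, k) (i, l)) * (starRingEnd ℂ) (D k l) := by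
  simp only [hsI, tens, Fintype.sum_prod_type, Matrix.one_apply, _root_.map_mul, apply_ite
    (starRingEnd ℂ), _root_.map_one, map_zero, mul_ite, mul_one, mul_zero, ite_mul, zero_mul, one_mul,
    Finset.sum_ite_irrel, Finset.sum_const_zero,
    Finset.sum_ite_eq, Finset.mem_univ, if_true, Finset.sum_mul]
  trans ∑ x1 : Fin n, ∑ x : Fin 2, ∑ x3 : Fin n, M (x, x1) (x, x3) * (starRingEnd ℂ) (D x1 x3)
  · exact Finset.sum_comm (f := fun (x : Fin 2) (x1 : Fin n) =>
      ∑ x3 : Fin n, M (x, x1) (x, x3) * (starRingEnd ℂ) (D x1 x3))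
  · exact Finset.sum_congr rfl fun x1 _ => Finset.sum_comm (f := fun (x : Fin 2) (x3 : Fin n) =>
      M (x, x1) (x, x3) * (starRingEnd ℂ) (D x1 x3))


lemma ptr2_Pproj {n : ℕ} (hn : (n : ℂ) ≠ 0) (A : Matrix (Fin 2 × Fin n) (Fin 2 × Fin n) ℂ) :
    ptr2 (Pproj A) = 0 := by
  funext i j
  by_cases hij : i = j
  · subst hij
    simp only [ptr2, ptr1, Pproj, tens, Matrix.sub_apply, Matrix.add_apply, Matrix.smul_apply,
      Matrix.one_apply, Matrix.trace, Matrix.diag, smul_eq_mul, Prod.mk.injEq,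
      Fintype.sum_prod_type, Finset.sum_sub_distrib, Finset.sum_add_distrib, if_true,
      eq_self_iff_true, mul_one, one_mul, Matrix.zero_apply, Finset.sum_const,
      Finset.card_univ, Fintype.card_fin, nsmul_eq_mul]
    have hsw : (∑ x : Fin n, ∑ k : Fin 2, A (k, x) (k, x))
        = ∑ k : Fin 2, ∑ x : Fin n, A (k, x) (k, x) :=
      Finset.sum_comm (f := fun (x : Fin n) (k : Fin 2) => A (k, x) (k, x))
    rw [← Finset.mul_sum, hsw]
    field_simp
    ring
  · simp only [ptr2, ptr1, Pproj, tens, Matrix.sub_apply, Matrix.add_apply, Matrix.smul_apply,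
      Matrix.one_apply, Matrix.trace, Matrix.diag, smul_eq_mul, Prod.mk.injEq,
      Fintype.sum_prod_type, Finset.sum_sub_distrib, Finset.sum_add_distrib, hij, if_false,
      mul_zero, zero_mul, Matrix.zero_apply, if_true, false_and, and_true, mul_ite, mul_one,
      Finset.sum_const, Finset.card_univ, Fintype.card_fin, nsmul_eq_mul, Finset.sum_const_zero]
    field_simp
    simp

lemma ptr1_Pproj {n : ℕ} (hn : (n : ℂ) ≠ 0) (A : Matrix (Fin 2 × Fin n) (Fin 2 × Fin n) ℂ) :
    ptr1 (Pproj A) = 0 := by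
  funext k l
  by_cases hkl : k = l
  · subst hkl
    simp only [ptr2, ptr1, Pproj, tens, Matrix.sub_apply, Matrix.add_apply, Matrix.smul_apply,
      Matrix.one_apply, Matrix.trace, Matrix.diag, smul_eq_mul, Prod.mk.injEq,
      Fintype.sum_prod_type, Finset.sum_sub_distrib, Finset.sum_add_distrib, if_true,
      eq_self_iff_true, mul_one, one_mul, Matrix.zero_apply, Finset.sum_const,
      Finset.card_univ, Fintype.card_fin, nsmul_eq_mul]
    rw [← Finset.mul_sum]
    field_simp
    ring
  · simp only [ptr2, ptr1, Pproj, tens, Matrix.sub_apply, Matrix.add_apply, Matrix.smul_apply,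
      Matrix.one_apply, Matrix.trace, Matrix.diag, smul_eq_mul, Prod.mk.injEq,
      Fintype.sum_prod_type, Finset.sum_sub_distrib, Finset.sum_add_distrib, hkl, if_false,
      mul_zero, zero_mul, Matrix.zero_apply, if_true, and_false, true_and, and_true, mul_ite,
      mul_one, Finset.sum_const, Finset.card_univ, Fintype.card_fin, nsmul_eq_mul,
      Finset.sum_const_zero]
    push_cast
    ring

lemma sum_k_eq {n : ℕ} (hn : (n : ℂ) ≠ 0) (A : Matrix (Fin 2 × Fin n) (Fin 2 × Fin n) ℂ)
    (i j : Fin 2) : (∑ k, A (i, k) (j, k)) = (n : ℂ) * ptr2 A i j := by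
  simp only [ptr2]
  field_simp

lemma hsI_Qproj_self {n : ℕ} (hn : (n : ℂ) ≠ 0) (A : Matrix (Fin 2 × Fin n) (Fin 2 × Fin n) ℂ) :
    hsI (Qproj A) A = hsI (Qproj A) (Qproj A) := by
  set lam : ℂ := ((1 : ℂ) / 2) * (ptr2 A).trace with hlam
  set B : Matrix (Fin 2) (Fin 2) ℂ := ptr2 A - lam • 1 with hB
  have h2 : ∀ i j, (∑ k : Fin n, (tens B (1 : Matrix (Fin n) (Fin n) ℂ)) (i, k) (j, k))
      = (n : ℂ) * B i j := by
    intro i j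
    simp [tens, Matrix.one_apply, Finset.sum_const, Finset.card_univ, mul_comm]
  have htrB : ∑ i, B i i = 0 := by
    simp only [hB, Matrix.sub_apply, Matrix.smul_apply, Matrix.one_apply, smul_eq_mul,
      Finset.sum_sub_distrib, hlam, Matrix.trace, Matrix.diag]
    rw [Fin.sum_univ_two, Fin.sum_univ_two]
    simp
    ring
  show hsI (tens B 1) A = hsI (tens B 1) (tens B 1)
  rw [hsI_tens_one_left, hsI_tens_one_left, ← sub_eq_zero, ← Finset.sum_sub_distrib]
  have key : ∀ i : Fin 2, (∑ j, B i j * (starRingEnd ℂ) (∑ k, A (i, k) (j, k)))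
      - (∑ j, B i j * (starRingEnd ℂ) (∑ k, (tens B (1 : Matrix (Fin n) (Fin n) ℂ)) (i, k) (j, k)))
      = B i i * (starRingEnd ℂ) ((n : ℂ) * lam) := by
    intro i
    rw [← Finset.sum_sub_distrib]
    have hterm : ∀ j, B i j * (starRingEnd ℂ) (∑ k, A (i, k) (j, k))
        - B i j * (starRingEnd ℂ) (∑ k, (tens B (1 : Matrix (Fin n) (Fin n) ℂ)) (i, k) (j, k))
        = if i = j then B i i * (starRingEnd ℂ) ((n : ℂ) * lam) else 0 := by
      intro j
      rw [sum_k_eq hn, h2, ← mul_sub, ← map_sub]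
      have hdiff : (n : ℂ) * ptr2 A i j - (n : ℂ) * B i j
          = if i = j then (n : ℂ) * lam else 0 := by
        simp only [hB, Matrix.sub_apply, Matrix.smul_apply, Matrix.one_apply, smul_eq_mul]
        split <;> ring
      rw [hdiff]
      split
      · rename_i h; subst h; rfl
      · simp
    rw [Finset.sum_congr rfl fun j _ => hterm j]
    simp
  rw [Finset.sum_congr rfl fun i _ => key i, ← Finset.sum_mul, htrB, zero_mul]

lemma hsI_vanish_tensC {n : ℕ} (hn : (n : ℂ) ≠ 0) (M : Matrix (Fin 2 × Fin n) (Fin 2 × Fin n) ℂ)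
    (h2 : ptr2 M = 0) (C : Matrix (Fin 2) (Fin 2) ℂ) :
    hsI M (tens C (1 : Matrix (Fin n) (Fin n) ℂ)) = 0 := by
  rw [hsI_tens_one_right]
  have : ∀ i j : Fin 2, (∑ k, M (i, k) (j, k)) = 0 := by
    intro i j
    rw [sum_k_eq hn M i j, h2]
    simp
  simp [this]

lemma hsI_vanish_oneD {n : ℕ} (M : Matrix (Fin 2 × Fin n) (Fin 2 × Fin n) ℂ)
    (h1 : ptr1 M = 0) (D : Matrix (Fin n) (Fin n) ℂ) :
    hsI M (tens (1 : Matrix (Fin 2) (Fin 2) ℂ) D) = 0 := by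
  rw [hsI_one_tens_right]
  have : ∀ k l : Fin n, (∑ i, M (i, k) (i, l)) = 0 := by
    intro k l
    have h := congrFun (congrFun h1 k) l
    simp only [ptr1, Matrix.zero_apply] at h
    have h2 : ((1 : ℂ) / 2) ≠ 0 := by norm_num
    exact (mul_eq_zero.mp h).resolve_left h2
  simp [this]

lemma smul_one_eq_tens {n : ℕ} (c : ℂ) :
    (c • (1 : Matrix (Fin 2 × Fin n) (Fin 2 × Fin n) ℂ))
      = tens (c • (1 : Matrix (Fin 2) (Fin 2) ℂ)) (1 : Matrix (Fin n) (Fin n) ℂ) := by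
  funext p q
  by_cases hA : p.1 = q.1 <;> by_cases hB : p.2 = q.2 <;>
    simp [tens, Matrix.one_apply, Prod.ext_iff, hA, hB]

lemma hsI_Pproj_self {n : ℕ} (hn : (n : ℂ) ≠ 0)
    (A : Matrix (Fin 2 × Fin n) (Fin 2 × Fin n) ℂ) :
    hsI (Pproj A) A = hsI (Pproj A) (Pproj A) := by
  have hA : A = Pproj A + (tens (ptr2 A) (1 : Matrix (Fin n) (Fin n) ℂ)
      + (tens (1 : Matrix (Fin 2) (Fin 2) ℂ) (ptr1 A)
        - ((1 / (2 * (n : ℂ))) * A.trace) • (1 : Matrix (Fin 2 × Fin n) (Fin 2 × Fin n) ℂ))) := by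
    unfold Pproj; abel
  rw [congrArg (hsI (Pproj A)) hA, hsI_add_right, hsI_add_right, hsI_sub_right,
    hsI_vanish_tensC hn _ (ptr2_Pproj hn A) (ptr2 A),
    hsI_vanish_oneD _ (ptr1_Pproj hn A) (ptr1 A),
    smul_one_eq_tens, hsI_vanish_tensC hn _ (ptr2_Pproj hn A)]
  ring

lemma hsI_add_left {n : ℕ} (A B C : Matrix (Fin 2 × Fin n) (Fin 2 × Fin n) ℂ) :
    hsI (A + B) C = hsI A C + hsI B C := by
  simp [hsI, Matrix.add_apply, add_mul, Finset.sum_add_distrib]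

lemma hsI_smul_left {n : ℕ} (c : ℂ) (A C : Matrix (Fin 2 × Fin n) (Fin 2 × Fin n) ℂ) :
    hsI (c • A) C = c * hsI A C := by
  simp [hsI, Matrix.smul_apply, Finset.mul_sum, mul_assoc]

lemma re_hsI_self {n : ℕ} (M : Matrix (Fin 2 × Fin n) (Fin 2 × Fin n) ℂ) :
    (hsI M M).re = ∑ p, ∑ q, ‖M p q‖ ^ 2 := by
  simp [hsI, Complex.mul_conj, Complex.re_sum, Complex.normSq_eq_norm_sq,
    ← Complex.ofReal_pow]

/-- if `c > 0` satisfies `‖μ_{0,0}(Ψ)‖ ≥ c‖Ψ‖²` for all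
`Ψ ∈ ℂ² ⊗ ℂⁿ` (with `n ≥ 2`), then for all `τ ≥ 0` and all `Ψ`,
`⟨μ_{0,τ}(Ψ)Ψ, Ψ⟩ ≥ c²‖Ψ‖⁴`. -/
theorem stmt5 (n : ℕ) (hn : 2 ≤ n) (c : ℝ) (hc : 0 < c)
    (hbound : ∀ Ψ : Fin 2 × Fin n → ℂ,
      c * (∑ i, ‖Ψ i‖ ^ 2) ≤ frobNorm (Pproj (vecMulVec Ψ (star Ψ)))) :
    ∀ (τ : ℝ), 0 ≤ τ → ∀ Ψ : Fin 2 × Fin n → ℂ,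
      c ^ 2 * (∑ i, ‖Ψ i‖ ^ 2) ^ 2
        ≤ (∑ i, ((Pproj (vecMulVec Ψ (star Ψ))
              + (τ : ℂ) • Qproj (vecMulVec Ψ (star Ψ))).mulVec Ψ) i
            * (starRingEnd ℂ) (Ψ i)).re := by
  intro τ hτ Ψ
  have hn0 : (n : ℂ) ≠ 0 := Nat.cast_ne_zero.mpr (by omega)
  set X := vecMulVec Ψ (star Ψ) with hX
  rw [mulVec_eq_hsI, hsI_add_left, hsI_smul_left, hsI_Pproj_self hn0, hsI_Qproj_self hn0]
  rw [Complex.add_re, Complex.mul_re]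
  simp only [Complex.ofReal_re, Complex.ofReal_im, zero_mul, sub_zero]
  rw [re_hsI_self, re_hsI_self]
  have hS : (0 : ℝ) ≤ ∑ i, ‖Ψ i‖ ^ 2 :=
    Finset.sum_nonneg fun i _ => sq_nonneg _
  have h1 : c * (∑ i, ‖Ψ i‖ ^ 2) ≤ frobNorm (Pproj X) := hbound Ψ
  have hfrob : (frobNorm (Pproj X)) ^ 2 = ∑ p, ∑ q, ‖Pproj X p q‖ ^ 2 := by
    rw [frobNorm, Real.sq_sqrt]
    exact Finset.sum_nonneg fun p _ => Finset.sum_nonneg fun q _ => sq_nonneg _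
  have hsq : (c * (∑ i, ‖Ψ i‖ ^ 2)) ^ 2 ≤ (frobNorm (Pproj X)) ^ 2 :=
    pow_le_pow_left₀ (mul_nonneg hc.le hS) h1 2
  have hQ : 0 ≤ τ * ∑ p, ∑ q, ‖Qproj X p q‖ ^ 2 := by
    apply mul_nonneg hτ
    exact Finset.sum_nonneg fun p _ => Finset.sum_nonneg fun q _ => sq_nonneg _
  have key : c ^ 2 * (∑ i, ‖Ψ i‖ ^ 2) ^ 2 ≤ ∑ p, ∑ q, ‖Pproj X p q‖ ^ 2 := by
    calc c ^ 2 * (∑ i, ‖Ψ i‖ ^ 2) ^ 2 = (c * (∑ i, ‖Ψ i‖ ^ 2)) ^ 2 := by ring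
      _ ≤ (frobNorm (Pproj X)) ^ 2 := hsq
      _ = ∑ p, ∑ q, ‖Pproj X p q‖ ^ 2 := hfrob
  linarith
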